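/- arXiv:2110.08886 — 4 statements merged into one kernel-verified Lean document; each statement's English description precedes it below -/
import Mathlib

section
/- Swapping lemma for domination: let s, t ∈ ℝ^m, let π be a permutation with s_{π(k)} ≥ t_k for all k, let i ≠ j be indices, and let x > 0. Define s' by adding x to coordinate π(j) of s and leaving other coordinates unchanged, and define t' by adding x to coordinate i of t. If s_{π(j)} ≤ s_{π(i)} and t_i ≤ t_j (i.e., t_i is minimal among the coordinates where x is added in t, and s_{π(j)} is minimal in s), then s' dominates t' via the permutation π' obtained from π by swapping the values π(i) and π(j). -/
/-- Swapping lemma for domination: if `s` dominates `t` via `π`, `x > 0` is added to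
coordinate `π j` of `s` and to coordinate `i` of `t`, where `s (π j) ≤ s (π i)` and
`t i ≤ t j`, then the updated vectors satisfy domination via the permutation obtained
from `π` by swapping the values `π i` and `π j`. -/
theorem dominates_swap {m : ℕ} (hm : 2 ≤ m) (s t : Fin m → ℝ) (π : Equiv.Perm (Fin m))
    (hdom : ∀ k, t k ≤ s (π k)) (i j : Fin m) (hij : i ≠ j) (x : ℝ) (hx : 0 < x)
    (hs : s (π j) ≤ s (π i)) (ht : t i ≤ t j) :
    ∀ k, Function.update t i (t i + x) k ≤
      Function.update s (π j) (s (π j) + x) (((Equiv.swap i j).trans π) k) := by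
  intro k
  rcases eq_or_ne k i with rfl | hki
  · rw [Function.update_self, Equiv.trans_apply, Equiv.swap_apply_left,
      Function.update_self]
    linarith [hdom j]
  rcases eq_or_ne k j with rfl | hkj
  · rw [Function.update_of_ne hki, Equiv.trans_apply, Equiv.swap_apply_right,
      Function.update_of_ne (fun h => hki (π.injective h).symm)]
    linarith [hdom k]
  · rw [Function.update_of_ne hki, Equiv.trans_apply,
      Equiv.swap_apply_of_ne_of_ne hki hkj,
      Function.update_of_ne (fun h => hkj (π.injective h))]
    exact hdom k
end

section
/- List Scheduling (LS) is value-monotone with respect to a single increase: fix m ≥ 2, an input sequence x = (x_1,...,x_n) of positive reals, an index j, and ε > 0; let x' equal x except x'_j = x_j + ε. Then the vector of bin sums produced by LS on input x' dominates the vector of bin sums produced by LS on input x. -/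
open scoped Classical

/-- The bin chosen by List Scheduling: the smallest-index bin with minimal current sum. -/
noncomputable def lsIndex {m : ℕ} (hm : 0 < m) (v : Fin m → ℝ) : Fin m :=
  (Finset.univ.filter fun i => ∀ j, v i ≤ v j).min' (by
    obtain ⟨i, -, hi⟩ := Finset.exists_min_image Finset.univ v ⟨⟨0, hm⟩, Finset.mem_univ _⟩
    exact ⟨i, Finset.mem_filter.mpr ⟨Finset.mem_univ _, fun j => hi j (Finset.mem_univ _)⟩⟩)

/-- One step of List Scheduling: place `x` into the chosen bin. -/
noncomputable def lsStep {m : ℕ} (hm : 0 < m) (v : Fin m → ℝ) (x : ℝ) : Fin m → ℝ :=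
  Function.update v (lsIndex hm v) (v (lsIndex hm v) + x)

/-- The vector of bin sums after List Scheduling processes the list `xs` into `m` bins. -/
noncomputable def lsSums {m : ℕ} (hm : 0 < m) (xs : List ℝ) : Fin m → ℝ :=
  xs.foldl (lsStep hm) (fun _ => 0)

/-- `s` dominates `t` iff some permutation `π` satisfies `s (π i) ≥ t i` for all `i`. -/
def Dominates {m : ℕ} (s t : Fin m → ℝ) : Prop :=
  ∃ π : Equiv.Perm (Fin m), ∀ i, t i ≤ s (π i)

lemma lsIndex_min {m : ℕ} (hm : 0 < m) (v : Fin m → ℝ) (j : Fin m) :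
    v (lsIndex hm v) ≤ v j := by
  have h := Finset.min'_mem (Finset.univ.filter fun i => ∀ j, v i ≤ v j) (by
    obtain ⟨i, -, hi⟩ := Finset.exists_min_image Finset.univ v ⟨⟨0, hm⟩, Finset.mem_univ _⟩
    exact ⟨i, Finset.mem_filter.mpr ⟨Finset.mem_univ _, fun j => hi j (Finset.mem_univ _)⟩⟩)
  rw [Finset.mem_filter] at h
  exact h.2 j

lemma dominates_step {m : ℕ} (hm : 0 < m) {s t : Fin m → ℝ} {a b : ℝ}
    (hab : b ≤ a) (h : Dominates s t) : Dominates (lsStep hm s a) (lsStep hm t b) := by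
  obtain ⟨π, hπ⟩ := h
  set i₀ := lsIndex hm t with hi₀
  set k₀ := lsIndex hm s with hk₀
  refine ⟨π.trans (Equiv.swap k₀ (π i₀)), fun i => ?_⟩
  simp only [Equiv.trans_apply]
  by_cases hi : i = i₀
  · rw [hi, Equiv.swap_apply_right]
    have h1 : lsStep hm t b i₀ = t i₀ + b := by
      simp [lsStep, hi₀]
    have h2 : lsStep hm s a k₀ = s k₀ + a := by
      simp [lsStep, hk₀]
    rw [h1, h2]
    have : t i₀ ≤ s k₀ := le_trans (lsIndex_min hm t (π.symm k₀))
      (by simpa using hπ (π.symm k₀))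
    linarith
  · have ht : lsStep hm t b i = t i := Function.update_of_ne hi _ _
    rw [ht]
    by_cases hk : π i = k₀
    · rw [hk, Equiv.swap_apply_left]
      have hne : π i₀ ≠ k₀ := fun hc => hi (π.injective (hk.trans hc.symm))
      rw [show lsStep hm s a (π i₀) = s (π i₀) from Function.update_of_ne hne _ _]
      exact le_trans (hπ i) (hk ▸ lsIndex_min hm s (π i₀))
    · have hne2 : π i ≠ π i₀ := fun hc => hi (π.injective hc)
      rw [Equiv.swap_apply_of_ne_of_ne hk hne2,
        show lsStep hm s a (π i) = s (π i) from Function.update_of_ne hk _ _]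
      exact hπ i

lemma dominates_foldl {m : ℕ} (hm : 0 < m) :
    ∀ {as bs : List ℝ}, List.Forall₂ (· ≤ ·) bs as → ∀ {s t : Fin m → ℝ}, Dominates s t →
      Dominates (as.foldl (lsStep hm) s) (bs.foldl (lsStep hm) t) := by
  intro as bs h
  induction h with
  | nil => intro s t h; exact h
  | cons hab _ ih => intro s t h; exact ih (dominates_step hm hab h)

/-- List Scheduling is value-monotone with respect to a single increase:
increasing one input by `ε > 0` makes the output bin-sum vector dominate the old one. -/
theorem ls_single_increase_dominates {m n : ℕ} (hm : 2 ≤ m) (x : Fin n → ℝ)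
    (hpos : ∀ i, 0 < x i) (j : Fin n) (ε : ℝ) (hε : 0 < ε) :
    Dominates (lsSums (by omega : 0 < m) (List.ofFn (Function.update x j (x j + ε))))
      (lsSums (by omega : 0 < m) (List.ofFn x)) := by
  unfold lsSums
  refine dominates_foldl _ ?_ ⟨Equiv.refl _, fun i => le_refl _⟩
  rw [List.forall₂_iff_get]
  refine ⟨by simp, fun i h1 h2 => ?_⟩
  simp only [List.get_ofFn]
  have key : ∀ k : Fin n, x k ≤ Function.update x j (x j + ε) k := by
    intro k
    rcases eq_or_ne k j with h | h
    · subst h; rw [Function.update_self]; linarith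
    · rw [Function.update_of_ne h]
  exact key _
end

section
/- MultiFit is not value-monotone: for m = 3, on the input (44, 24, 24, 22, 21, 17, 8, 8, 6, 6) MultiFit (using FFD with binary search over capacities) achieves largest bin sum 60, but on the pointwise-smaller input (44, 24, 24, 22, 21, 16, 8, 8, 6, 6) the smallest capacity c for which FFD packs all inputs into at most 3 bins is 62, so the largest bin sum increases from 60 to 62 when an input decreases. -/
open scoped Classical

/-- One pass of First Fit Decreasing with capacity `c`: greedily add inputs (in order)
to the current bin of sum `s` when they fit; return the final bin sum together with
the skipped inputs (in order). -/
noncomputable def ffdBinAux (c : ℝ) : List ℝ → ℝ → ℝ × List ℝ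
  | [], s => (s, [])
  | x :: l, s =>
      if s + x ≤ c then ffdBinAux c l (s + x)
      else
        let p := ffdBinAux c l s
        (p.1, x :: p.2)

/-- FFD bins with capacity `c`: repeatedly open a new bin and greedily fill it from
the remaining inputs; `fuel` bounds the number of bins opened. Returns the list of
bin sums. -/
noncomputable def ffdBins (c : ℝ) : ℕ → List ℝ → List ℝ
  | 0, _ => []
  | _, [] => []
  | fuel + 1, x :: l =>
      let p := ffdBinAux c (x :: l) 0
      p.1 :: ffdBins c fuel p.2

/-- First Fit Decreasing with capacity `c`: sort the inputs in nonincreasing order and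
pack them greedily into bins of capacity `c`; returns the list of bin sums. -/
noncomputable def ffd (c : ℝ) (xs : List ℝ) : List ℝ :=
  ffdBins c xs.length (xs.mergeSort (fun a b => decide (b ≤ a)))

lemma ffdBinAux_fst_add_sum (c : ℝ) (l : List ℝ) : ∀ (s : ℝ),
    (ffdBinAux c l s).1 + (ffdBinAux c l s).2.sum = s + l.sum := by
  induction l with
  | nil => intro s; simp [ffdBinAux]
  | cons x l ih =>
    intro s
    rw [ffdBinAux]
    split
    · have := ih (s + x); simp only [List.sum_cons] at *; linarith
    · have := ih s; simp only [List.sum_cons] at *; linarith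

lemma ffdBinAux_fst_le (c : ℝ) (l : List ℝ) : ∀ (s : ℝ), s ≤ max 0 c →
    (ffdBinAux c l s).1 ≤ max 0 c := by
  induction l with
  | nil => intro s hs; simpa [ffdBinAux] using hs
  | cons x l ih =>
    intro s hs
    rw [ffdBinAux]
    split
    · next hcd => exact ih _ (le_trans hcd (le_max_right 0 c))
    · exact ih _ hs

lemma ffdBins_sum (c : ℝ) : ∀ (fuel : ℕ) (l : List ℝ),
    (ffdBins c fuel l).length < fuel → (ffdBins c fuel l).sum = l.sum := by
  intro fuel
  induction fuel with
  | zero => intro l h; simp at h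
  | succ n ih =>
    intro l h
    match l with
    | [] => simp [ffdBins]
    | x :: l =>
      rw [ffdBins] at h ⊢
      simp only [List.length_cons, List.sum_cons] at h ⊢
      have h2 := ih (ffdBinAux c (x :: l) 0).2 (by omega)
      have h3 := ffdBinAux_fst_add_sum c (x :: l) 0
      simp only [List.sum_cons] at h3
      rw [h2]
      linarith

lemma ffdBins_mem_le (c : ℝ) : ∀ (fuel : ℕ) (l : List ℝ) (s : ℝ),
    s ∈ ffdBins c fuel l → s ≤ max 0 c := by
  intro fuel
  induction fuel with
  | zero => intro l s h; simp [ffdBins] at h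
  | succ n ih =>
    intro l s h
    match l with
    | [] => simp [ffdBins] at h
    | x :: l =>
      rw [ffdBins] at h
      rcases List.mem_cons.1 h with h | h
      · exact h ▸ ffdBinAux_fst_le c (x :: l) 0 (le_max_left 0 c)
      · exact ih _ _ h

lemma ffd_sum_le (c : ℝ) (xs : List ℝ) (m : ℕ) (hm : m < xs.length)
    (h : (ffd c xs).length ≤ m) : xs.sum ≤ m * max 0 c := by
  rw [ffd] at h
  have hsum := ffdBins_sum c xs.length (xs.mergeSort (fun a b => decide (b ≤ a))) (by omega)
  have hperm : (xs.mergeSort (fun a b => decide (b ≤ a))).sum = xs.sum :=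
    (List.mergeSort_perm xs _).sum_eq
  have hle := List.sum_le_card_nsmul (ffdBins c xs.length (xs.mergeSort (fun a b => decide (b ≤ a))))
    (max 0 c) (fun s hs => ffdBins_mem_le c _ _ s hs)
  rw [← hperm, ← hsum]
  calc _ ≤ _ := hle
    _ ≤ (m : ℝ) * max 0 c := by
        rw [nsmul_eq_mul]
        exact mul_le_mul_of_nonneg_right (by exact_mod_cast h) (le_max_left 0 c)

lemma ffdBinAux_nil (c s : ℝ) : ffdBinAux c [] s = (s, []) := rfl

lemma ffdBinAux_pos {c s x : ℝ} (l : List ℝ) (h : s + x ≤ c) :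
    ffdBinAux c (x :: l) s = ffdBinAux c l (s + x) := by
  rw [ffdBinAux, if_pos h]

lemma ffdBinAux_neg {c s x : ℝ} (l : List ℝ) (h : ¬ (s + x ≤ c)) :
    ffdBinAux c (x :: l) s = ((ffdBinAux c l s).1, x :: (ffdBinAux c l s).2) := by
  rw [ffdBinAux, if_neg h]

lemma ffdBins_step (c : ℝ) (n : ℕ) (x s : ℝ) (l r rest : List ℝ)
    (h : ffdBinAux c (x :: l) 0 = (s, r)) (h2 : ffdBins c n r = rest) :
    ffdBins c (n + 1) (x :: l) = s :: rest := by
  show (ffdBinAux c (x :: l) 0).1 :: ffdBins c n (ffdBinAux c (x :: l) 0).2 = _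
  rw [h, h2]

lemma sortL1 : ([44, 24, 24, 22, 21, 17, 8, 8, 6, 6] : List ℝ).mergeSort (fun a b => decide (b ≤ a)) = [44, 24, 24, 22, 21, 17, 8, 8, 6, 6] := by
  apply List.mergeSort_of_pairwise
  simp only [List.pairwise_cons, List.mem_cons, decide_eq_true_eq]
  norm_num

lemma sortL2 : ([44, 24, 24, 22, 21, 16, 8, 8, 6, 6] : List ℝ).mergeSort (fun a b => decide (b ≤ a)) = [44, 24, 24, 22, 21, 16, 8, 8, 6, 6] := by
  apply List.mergeSort_of_pairwise
  simp only [List.pairwise_cons, List.mem_cons, decide_eq_true_eq]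
  norm_num

lemma ffdL1 (c : ℝ) : ffd c [44, 24, 24, 22, 21, 17, 8, 8, 6, 6] = ffdBins c 10 [44, 24, 24, 22, 21, 17, 8, 8, 6, 6] := by
  rw [ffd, sortL1]; norm_num

lemma ffdL2 (c : ℝ) : ffd c [44, 24, 24, 22, 21, 16, 8, 8, 6, 6] = ffdBins c 10 [44, 24, 24, 22, 21, 16, 8, 8, 6, 6] := by
  rw [ffd, sortL2]; norm_num

lemma comp60 (c : ℝ) (h1 : c = 60) : ffdBins c 10 ([44, 24, 24, 22, 21, 17, 8, 8, 6, 6] : List ℝ) = [60, 60, 60] := by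
  have b1 : ffdBinAux c ([44, 24, 24, 22, 21, 17, 8, 8, 6, 6] : List ℝ) 0 = (60, [24, 24, 22, 21, 17, 6, 6]) := by
    rw [ffdBinAux_pos _ (by linarith), ffdBinAux_neg _ (by intro hX; linarith), ffdBinAux_neg _ (by intro hX; linarith), ffdBinAux_neg _ (by intro hX; linarith), ffdBinAux_neg _ (by intro hX; linarith), ffdBinAux_neg _ (by intro hX; linarith), ffdBinAux_pos _ (by linarith), ffdBinAux_pos _ (by linarith), ffdBinAux_neg _ (by intro hX; linarith), ffdBinAux_neg _ (by intro hX; linarith), ffdBinAux_nil]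
    norm_num
  have b2 : ffdBinAux c ([24, 24, 22, 21, 17, 6, 6] : List ℝ) 0 = (60, [22, 21, 17]) := by
    rw [ffdBinAux_pos _ (by linarith), ffdBinAux_pos _ (by linarith), ffdBinAux_neg _ (by intro hX; linarith), ffdBinAux_neg _ (by intro hX; linarith), ffdBinAux_neg _ (by intro hX; linarith), ffdBinAux_pos _ (by linarith), ffdBinAux_pos _ (by linarith), ffdBinAux_nil]
    norm_num
  have b3 : ffdBinAux c ([22, 21, 17] : List ℝ) 0 = (60, []) := by
    rw [ffdBinAux_pos _ (by linarith), ffdBinAux_pos _ (by linarith), ffdBinAux_pos _ (by linarith), ffdBinAux_nil]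
    norm_num
  have E60 : ffdBins c 10 ([44, 24, 24, 22, 21, 17, 8, 8, 6, 6] : List ℝ) = [60, 60, 60] :=
    ffdBins_step c 9 _ _ _ _ _ b1 (ffdBins_step c 8 _ _ _ _ _ b2 (ffdBins_step c 7 _ _ _ _ _ b3 (rfl)))
  exact E60

lemma comp62 (c : ℝ) (h1 : c = 62) : ffdBins c 10 ([44, 24, 24, 22, 21, 16, 8, 8, 6, 6] : List ℝ) = [60, 62, 57] := by
  have b1 : ffdBinAux c ([44, 24, 24, 22, 21, 16, 8, 8, 6, 6] : List ℝ) 0 = (60, [24, 24, 22, 21, 8, 8, 6, 6]) := by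
    rw [ffdBinAux_pos _ (by linarith), ffdBinAux_neg _ (by intro hX; linarith), ffdBinAux_neg _ (by intro hX; linarith), ffdBinAux_neg _ (by intro hX; linarith), ffdBinAux_neg _ (by intro hX; linarith), ffdBinAux_pos _ (by linarith), ffdBinAux_neg _ (by intro hX; linarith), ffdBinAux_neg _ (by intro hX; linarith), ffdBinAux_neg _ (by intro hX; linarith), ffdBinAux_neg _ (by intro hX; linarith), ffdBinAux_nil]
    norm_num
  have b2 : ffdBinAux c ([24, 24, 22, 21, 8, 8, 6, 6] : List ℝ) 0 = (62, [22, 21, 8, 6]) := by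
    rw [ffdBinAux_pos _ (by linarith), ffdBinAux_pos _ (by linarith), ffdBinAux_neg _ (by intro hX; linarith), ffdBinAux_neg _ (by intro hX; linarith), ffdBinAux_pos _ (by linarith), ffdBinAux_neg _ (by intro hX; linarith), ffdBinAux_pos _ (by linarith), ffdBinAux_neg _ (by intro hX; linarith), ffdBinAux_nil]
    norm_num
  have b3 : ffdBinAux c ([22, 21, 8, 6] : List ℝ) 0 = (57, []) := by
    rw [ffdBinAux_pos _ (by linarith), ffdBinAux_pos _ (by linarith), ffdBinAux_pos _ (by linarith), ffdBinAux_pos _ (by linarith), ffdBinAux_nil]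
    norm_num
  have E62 : ffdBins c 10 ([44, 24, 24, 22, 21, 16, 8, 8, 6, 6] : List ℝ) = [60, 62, 57] :=
    ffdBins_step c 9 _ _ _ _ _ b1 (ffdBins_step c 8 _ _ _ _ _ b2 (ffdBins_step c 7 _ _ _ _ _ b3 (rfl)))
  exact E62

lemma compA (c : ℝ) (h1 : 179 ≤ 3 * c) (h2 : c < 60) :
    ffdBins c 10 ([44, 24, 24, 22, 21, 16, 8, 8, 6, 6] : List ℝ) = [58, 56, 59, 6] := by
  have b1 : ffdBinAux c ([44, 24, 24, 22, 21, 16, 8, 8, 6, 6] : List ℝ) 0 = (58, [24, 24, 22, 21, 16, 8, 6]) := by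
    rw [ffdBinAux_pos _ (by linarith), ffdBinAux_neg _ (by intro hX; linarith), ffdBinAux_neg _ (by intro hX; linarith), ffdBinAux_neg _ (by intro hX; linarith), ffdBinAux_neg _ (by intro hX; linarith), ffdBinAux_neg _ (by intro hX; linarith), ffdBinAux_pos _ (by linarith), ffdBinAux_neg _ (by intro hX; linarith), ffdBinAux_pos _ (by linarith), ffdBinAux_neg _ (by intro hX; linarith), ffdBinAux_nil]
    norm_num
  have b2 : ffdBinAux c ([24, 24, 22, 21, 16, 8, 6] : List ℝ) 0 = (56, [22, 21, 16, 6]) := by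
    rw [ffdBinAux_pos _ (by linarith), ffdBinAux_pos _ (by linarith), ffdBinAux_neg _ (by intro hX; linarith), ffdBinAux_neg _ (by intro hX; linarith), ffdBinAux_neg _ (by intro hX; linarith), ffdBinAux_pos _ (by linarith), ffdBinAux_neg _ (by intro hX; linarith), ffdBinAux_nil]
    norm_num
  have b3 : ffdBinAux c ([22, 21, 16, 6] : List ℝ) 0 = (59, [6]) := by
    rw [ffdBinAux_pos _ (by linarith), ffdBinAux_pos _ (by linarith), ffdBinAux_pos _ (by linarith), ffdBinAux_neg _ (by intro hX; linarith), ffdBinAux_nil]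
    norm_num
  have b4 : ffdBinAux c ([6] : List ℝ) 0 = (6, []) := by
    rw [ffdBinAux_pos _ (by linarith), ffdBinAux_nil]
    norm_num
  have EA : ffdBins c 10 ([44, 24, 24, 22, 21, 16, 8, 8, 6, 6] : List ℝ) = [58, 56, 59, 6] :=
    ffdBins_step c 9 _ _ _ _ _ b1 (ffdBins_step c 8 _ _ _ _ _ b2 (ffdBins_step c 7 _ _ _ _ _ b3 (ffdBins_step c 6 _ _ _ _ _ b4 (rfl))))
  exact EA

lemma compB (c : ℝ) (h1 : 60 ≤ c) (h2 : c < 62) :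
    ffdBins c 10 ([44, 24, 24, 22, 21, 16, 8, 8, 6, 6] : List ℝ) = [60, 56, 57, 6] := by
  have b1 : ffdBinAux c ([44, 24, 24, 22, 21, 16, 8, 8, 6, 6] : List ℝ) 0 = (60, [24, 24, 22, 21, 8, 8, 6, 6]) := by
    rw [ffdBinAux_pos _ (by linarith), ffdBinAux_neg _ (by intro hX; linarith), ffdBinAux_neg _ (by intro hX; linarith), ffdBinAux_neg _ (by intro hX; linarith), ffdBinAux_neg _ (by intro hX; linarith), ffdBinAux_pos _ (by linarith), ffdBinAux_neg _ (by intro hX; linarith), ffdBinAux_neg _ (by intro hX; linarith), ffdBinAux_neg _ (by intro hX; linarith), ffdBinAux_neg _ (by intro hX; linarith), ffdBinAux_nil]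
    norm_num
  have b2 : ffdBinAux c ([24, 24, 22, 21, 8, 8, 6, 6] : List ℝ) 0 = (56, [22, 21, 8, 6, 6]) := by
    rw [ffdBinAux_pos _ (by linarith), ffdBinAux_pos _ (by linarith), ffdBinAux_neg _ (by intro hX; linarith), ffdBinAux_neg _ (by intro hX; linarith), ffdBinAux_pos _ (by linarith), ffdBinAux_neg _ (by intro hX; linarith), ffdBinAux_neg _ (by intro hX; linarith), ffdBinAux_neg _ (by intro hX; linarith), ffdBinAux_nil]
    norm_num
  have b3 : ffdBinAux c ([22, 21, 8, 6, 6] : List ℝ) 0 = (57, [6]) := by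
    rw [ffdBinAux_pos _ (by linarith), ffdBinAux_pos _ (by linarith), ffdBinAux_pos _ (by linarith), ffdBinAux_pos _ (by linarith), ffdBinAux_neg _ (by intro hX; linarith), ffdBinAux_nil]
    norm_num
  have b4 : ffdBinAux c ([6] : List ℝ) 0 = (6, []) := by
    rw [ffdBinAux_pos _ (by linarith), ffdBinAux_nil]
    norm_num
  have EB : ffdBins c 10 ([44, 24, 24, 22, 21, 16, 8, 8, 6, 6] : List ℝ) = [60, 56, 57, 6] :=
    ffdBins_step c 9 _ _ _ _ _ b1 (ffdBins_step c 8 _ _ _ _ _ b2 (ffdBins_step c 7 _ _ _ _ _ b3 (ffdBins_step c 6 _ _ _ _ _ b4 (rfl))))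
  exact EB
/-- MultiFit is not value-monotone: for `m = 3`, on `(44,24,24,22,21,17,8,8,6,6)` the
smallest capacity for which FFD packs all inputs into at most 3 bins is 60, and every
bin sum of the resulting packing is at most 60 (with some bin attaining 60); on the
pointwise-smaller input `(44,24,24,22,21,16,8,8,6,6)` the smallest such capacity is 62,
and the resulting largest bin sum is 62. Thus the largest bin sum increases from 60 to
62 when an input decreases. -/
theorem multifit_not_value_monotone :
    IsLeast {c : ℝ | (ffd c [44, 24, 24, 22, 21, 17, 8, 8, 6, 6]).length ≤ 3} 60 ∧
    (∀ s ∈ ffd 60 [44, 24, 24, 22, 21, 17, 8, 8, 6, 6], s ≤ 60) ∧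
    (60 : ℝ) ∈ ffd 60 [44, 24, 24, 22, 21, 17, 8, 8, 6, 6] ∧
    IsLeast {c : ℝ | (ffd c [44, 24, 24, 22, 21, 16, 8, 8, 6, 6]).length ≤ 3} 62 ∧
    (∀ s ∈ ffd 62 [44, 24, 24, 22, 21, 16, 8, 8, 6, 6], s ≤ 62) ∧
    (62 : ℝ) ∈ ffd 62 [44, 24, 24, 22, 21, 16, 8, 8, 6, 6] ∧
    (60 : ℝ) < 62 := by
  have e60 : ffd 60 [44, 24, 24, 22, 21, 17, 8, 8, 6, 6] = [60, 60, 60] := by rw [ffdL1, comp60 60 rfl]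
  have e62 : ffd 62 [44, 24, 24, 22, 21, 16, 8, 8, 6, 6] = [60, 62, 57] := by rw [ffdL2, comp62 62 rfl]
  refine ⟨⟨?_, ?_⟩, ?_, ?_, ⟨?_, ?_⟩, ?_, ?_, by norm_num⟩
  · show (ffd 60 [44, 24, 24, 22, 21, 17, 8, 8, 6, 6]).length ≤ 3
    rw [e60]; norm_num
  · intro c hc
    have hs := ffd_sum_le c [44, 24, 24, 22, 21, 17, 8, 8, 6, 6] 3 (by norm_num) hc
    norm_num at hs
    by_contra h
    push_neg at h
    have hmax : max 0 c < 60 := max_lt (by norm_num) h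
    linarith
  · rw [e60]; intro s hs; simp at hs; simp [hs]
  · rw [e60]; simp
  · show (ffd 62 [44, 24, 24, 22, 21, 16, 8, 8, 6, 6]).length ≤ 3
    rw [e62]; norm_num
  · intro c hc
    have hs := ffd_sum_le c [44, 24, 24, 22, 21, 16, 8, 8, 6, 6] 3 (by norm_num) hc
    norm_num at hs
    have hc' : (179 : ℝ) ≤ 3 * c := by
      rcases le_total c 0 with h | h
      · rw [max_eq_left h] at hs; linarith
      · rw [max_eq_right h] at hs; linarith
    simp only [Set.mem_setOf_eq] at hc
    by_contra h62
    push_neg at h62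
    rcases lt_or_ge c 60 with h60 | h60
    · have E := compA c hc' h60
      rw [ffdL2, E] at hc
      norm_num at hc
    · have E := compB c h60 h62
      rw [ffdL2, E] at hc
      norm_num at hc
  · rw [e62]; intro s hs; simp at hs
    rcases hs with rfl | rfl | rfl <;> norm_num
  · rw [e62]; simp
end

section
/- If vectors s, t ∈ ℝ^m satisfy s dominates t, and we add the same positive number x to a minimal coordinate of s and to a minimal coordinate of t, then the resulting vector s' dominates the resulting vector t'. -/
/-- If `s` dominates `t`, and the same `x > 0` is added to a minimal coordinate of `s`
and to a minimal coordinate of `t`, then the resulting vector dominates the resulting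
vector. -/
theorem dominates_add_to_min {m : ℕ} (s t : Fin m → ℝ) (h : Dominates s t)
    (i j : Fin m) (hi : ∀ k, s i ≤ s k) (hj : ∀ k, t j ≤ t k) (x : ℝ) (hx : 0 < x) :
    Dominates (Function.update s i (s i + x)) (Function.update t j (t j + x)) := by
  obtain ⟨π, hπ⟩ := h
  refine ⟨π * Equiv.swap j (π⁻¹ i), fun k => ?_⟩
  have hs' : ∀ v, s v ≤ Function.update s i (s i + x) v := by
    intro v
    rcases eq_or_ne v i with rfl | hv
    · simp; linarith
    · simp [Function.update_of_ne hv]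
  by_cases hk : k = j
  · subst hk
    have h1 : t k ≤ s i := le_trans (hj (π⁻¹ i)) (by simpa using hπ (π⁻¹ i))
    have h2 : (π * Equiv.swap k (π⁻¹ i)) k = i := by simp
    rw [h2, Function.update_self, Function.update_self]
    linarith
  · rw [Function.update_of_ne hk]
    by_cases hk2 : k = π⁻¹ i
    · subst hk2
      have h2 : (π * Equiv.swap j (π⁻¹ i)) (π⁻¹ i) = π j := by
        simp [Equiv.swap_apply_right]
      rw [h2]
      calc t (π⁻¹ i) ≤ s (π (π⁻¹ i)) := hπ _
        _ = s i := by simp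
        _ ≤ s (π j) := hi _
        _ ≤ _ := hs' _
    · have h2 : (π * Equiv.swap j (π⁻¹ i)) k = π k := by
        rw [Equiv.Perm.mul_apply, Equiv.swap_apply_of_ne_of_ne hk hk2]
      rw [h2]
      exact le_trans (hπ k) (hs' _)
end
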